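/- arXiv:1512.04084 — 2 statements merged into one kernel-verified Lean document; each statement's English description precedes it below -/
import Mathlib

section
/- Let r be a positive integer and let U_r be the random variable distributed uniformly on {0,1,...,r}. Then for all partitions λ and μ of the same weight n, λ dominates μ if and only if condition C(λ,μ,U_r) holds; i.e., independently filling each cell of the Ferrers diagrams of λ and μ with a number of balls drawn from U_r, λ dominates μ iff for all j, t ≥ 0 the probability that the Ferrers diagram of λ contains j balls in total with at most t balls in each row is at most the corresponding probability for μ. -/
open Finset

noncomputable section

/-- The ℕ×ℕ Toeplitz matrix of a sequence `p`, with `(T_p)_{i,j} = p_{j-i}`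
(and `0` when `j < i`, i.e. `p_n = 0` for negative `n`). -/
def toeplitz (p : ℕ → ℝ) : Matrix ℕ ℕ ℝ :=
  fun i j => if i ≤ j then p (j - i) else 0

/-- A matrix is totally non-negative of order `k` iff every minor of size at
most `k` (rows and columns chosen strictly increasingly) is non-negative. -/
def IsTN (k : ℕ) (M : Matrix ℕ ℕ ℝ) : Prop :=
  ∀ l : ℕ, l ≤ k → ∀ r c : Fin l → ℕ, StrictMono r → StrictMono c →
    0 ≤ (M.submatrix r c).det

/-- A matrix is totally positive of order `k` iff every minor of size at
most `k` is positive. -/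
def IsTP (k : ℕ) (M : Matrix ℕ ℕ ℝ) : Prop :=
  ∀ l : ℕ, l ≤ k → ∀ r c : Fin l → ℕ, StrictMono r → StrictMono c →
    0 < (M.submatrix r c).det

/-- The matrix `S_p` with `(S_p)_{i,j} = (p^i)_j`, the coefficient of `x^j` in
`p(x)^i` where `p(x) = Σ p_n x^n` (and `p(x)^0 = 1`). -/
def sMatrix (p : ℕ → ℝ) : Matrix ℕ ℕ ℝ :=
  fun i j => PowerSeries.coeff (R := ℝ) j (PowerSeries.mk p ^ i)

/-- A partition: a non-increasing function from the positive integers to ℕ with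
finite support (we set the irrelevant value at `0` to be `0`). -/
structure PartitionSeq where
  part : ℕ → ℕ
  zero : part 0 = 0
  antitone : ∀ ⦃i j : ℕ⦄, 1 ≤ i → i ≤ j → part j ≤ part i
  finSupp : (Function.support part).Finite

/-- The weight `|λ|` of a partition. -/
def PartitionSeq.weight (lam : PartitionSeq) : ℕ := ∑ᶠ i, lam.part i

/-- `λ` dominates `μ`: equal weights and partial sums of `λ` are at least
those of `μ`. -/
def PartitionSeq.Dominates (lam mu : PartitionSeq) : Prop :=
  lam.weight = mu.weight ∧
  ∀ j : ℕ, 1 ≤ j →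
    ∑ i ∈ Finset.Icc 1 j, mu.part i ≤ ∑ i ∈ Finset.Icc 1 j, lam.part i

/-- `f(λ, p(x), t, x) = ∏_i (p(x)^{λ(i)} |_t)`, the product over rows of the
truncations to degree `t` of powers of the generating function. -/
def fPoly (lam : PartitionSeq) (p : ℕ → ℝ) (t : ℕ) : Polynomial ℝ :=
  ∏ᶠ i : ℕ, PowerSeries.trunc (t + 1) (PowerSeries.mk p ^ lam.part i)

/-- `P(E(λ,X,j,t))` for `X` with probability mass function `p`: the coefficient
of `x^j` in `∏_i ((p_X(x))^{λ(i)} |_t)`. -/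
def probE (p : ℕ → ℝ) (lam : PartitionSeq) (j t : ℕ) : ℝ :=
  (fPoly lam p t).coeff j

/-- Condition `C(λ,μ,X)`: `P(E(λ,X,j,t)) ≤ P(E(μ,X,j,t))` for all `j, t ∈ ℕ`. -/
def CondC (p : ℕ → ℝ) (lam mu : PartitionSeq) : Prop :=
  ∀ j t : ℕ, probE p lam j t ≤ probE p mu j t

namespace DomC

noncomputable def cc (r : ℕ) : ℕ → ℤ → ℝ
  | 0, k => if k = 0 then 1 else 0
  | m+1, k => ∑ s ∈ Finset.Icc (0:ℤ) (r:ℤ), cc r m (k - s)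

variable {r : ℕ}

lemma cc_zero (k : ℤ) : cc r 0 k = if k = 0 then 1 else 0 := rfl

lemma cc_succ (m : ℕ) (k : ℤ) :
    cc r (m+1) k = ∑ s ∈ Finset.Icc (0:ℤ) (r:ℤ), cc r m (k - s) := rfl

lemma cc_nonneg (m : ℕ) (k : ℤ) : 0 ≤ cc r m k := by
  induction m generalizing k with
  | zero => rw [cc_zero]; split <;> norm_num
  | succ m ih => rw [cc_succ]; exact Finset.sum_nonneg fun s _ => ih _

lemma cc_neg (m : ℕ) (k : ℤ) (hk : k < 0) : cc r m k = 0 := by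
  induction m generalizing k with
  | zero => rw [cc_zero, if_neg (by omega)]
  | succ m ih =>
    rw [cc_succ]
    refine Finset.sum_eq_zero fun s hs => ih _ ?_
    simp only [Finset.mem_Icc] at hs
    omega

lemma cc_gt (m : ℕ) (k : ℤ) (hk : (r:ℤ) * m < k) : cc r m k = 0 := by
  induction m generalizing k with
  | zero => rw [cc_zero, if_neg (by push_cast at hk; omega)]
  | succ m ih =>
    rw [cc_succ]
    refine Finset.sum_eq_zero fun s hs => ih _ ?_
    simp only [Finset.mem_Icc] at hs
    push_cast at hk ⊢
    nlinarith [hs.1, hs.2]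

lemma cc_pos (m : ℕ) (k : ℤ) (h0 : 0 ≤ k) (h1 : k ≤ (r:ℤ) * m) : 0 < cc r m k := by
  induction m generalizing k with
  | zero => simp only [Nat.cast_zero, mul_zero] at h1
            rw [cc_zero, if_pos (by omega)]; norm_num
  | succ m ih =>
    rw [cc_succ]
    push_cast at h1
    rcases le_or_gt k ((r:ℤ) * m) with h | h
    · refine Finset.sum_pos' (fun s _ => cc_nonneg _ _) ⟨0, ?_, ?_⟩
      · simp only [Finset.mem_Icc]; omega
      · rw [sub_zero]; exact ih _ h0 h
    · refine Finset.sum_pos' (fun s _ => cc_nonneg _ _) ⟨k - (r:ℤ)*m, ?_, ?_⟩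
      · simp only [Finset.mem_Icc]; constructor <;> nlinarith
      · have : k - (k - (r:ℤ)*m) = (r:ℤ)*m := by ring
        rw [this]
        exact ih _ (by positivity) le_rfl

/-- Total nonnegativity of order 2 of the Toeplitz matrix of `u`. -/
def IsTN2Seq (u : ℤ → ℝ) : Prop :=
  ∀ i i' j j' : ℤ, i ≤ i' → j ≤ j' → u (j'-i) * u (j-i') ≤ u (j-i) * u (j'-i')

noncomputable def vv (r : ℕ) : ℤ → ℝ := fun x => if 0 ≤ x ∧ x ≤ (r:ℤ) then 1 else 0

lemma vv_nonneg (x : ℤ) : 0 ≤ vv r x := by unfold vv; split <;> norm_num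

lemma tn2_vv : IsTN2Seq (vv r) := by
  intro i i' j j' hi hj
  unfold vv
  split_ifs with h1 h2 h3 h4 h5 h6 h7 h8 <;> norm_num <;> omega

lemma tn2_cc_zero : IsTN2Seq (cc r 0) := by
  intro i i' j j' hi hj
  simp only [cc_zero]
  by_cases h : j' - i = 0 ∧ j - i' = 0
  · have h1 : j - i = 0 := by omega
    have h2 : j' - i' = 0 := by omega
    simp [h.1, h.2, h1, h2]
  · have hz : (if j' - i = 0 then (1:ℝ) else 0) * (if j - i' = 0 then (1:ℝ) else 0) = 0 := by
      rcases not_and_or.mp h with h' | h' <;> simp [h']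
    rw [hz]
    have : (0:ℝ) ≤ (if j - i = 0 then (1:ℝ) else 0) := by split <;> norm_num
    have : (0:ℝ) ≤ (if j' - i' = 0 then (1:ℝ) else 0) := by split <;> norm_num
    positivity

/-- window expansion of `cc (m+1)` -/
lemma cc_succ_window (m : ℕ) (i x : ℤ) (K : Finset ℤ) (hK : Finset.Icc (x - r) x ⊆ K) :
    cc r (m+1) (x - i) = ∑ k ∈ K, cc r m (k - i) * vv r (x - k) := by
  have h1 : ∑ k ∈ K, cc r m (k - i) * vv r (x - k)
      = ∑ k ∈ Finset.Icc (x - r) x, cc r m (k - i) * vv r (x - k) := by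
    refine (Finset.sum_subset hK ?_).symm
    intro k _ hk
    simp only [Finset.mem_Icc, not_and_or, not_le] at hk
    have : vv r (x - k) = 0 := by unfold vv; rw [if_neg]; omega
    rw [this, mul_zero]
  rw [h1, cc_succ]
  refine Finset.sum_nbij' (fun s => x - s) (fun k => x - k) ?_ ?_ ?_ ?_ ?_
  · intro s hs; simp only [Finset.mem_Icc] at *; omega
  · intro k hk; simp only [Finset.mem_Icc] at *; omega
  · intro s _; ring
  · intro k _; ring
  · intro s hs
    simp only [Finset.mem_Icc] at hs
    have hv : vv r (x - (x - s)) = 1 := by unfold vv; rw [if_pos]; omega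
    rw [hv, mul_one]
    ring_nf

lemma tn2_cc (m : ℕ) : IsTN2Seq (cc r m) := by
  induction m with
  | zero => exact tn2_cc_zero
  | succ m ih =>
    intro i i' j j' hi hj
    set K : Finset ℤ := Finset.Icc (min j j' - r) (max j j') with hKdef
    have hK1 : Finset.Icc (j - r) j ⊆ K := by
      intro x hx; simp only [Finset.mem_Icc, hKdef] at *; omega
    have hK2 : Finset.Icc (j' - r) j' ⊆ K := by
      intro x hx; simp only [Finset.mem_Icc, hKdef] at *; omega
    rw [cc_succ_window m i j K hK1, cc_succ_window m i' j' K hK2,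
        cc_succ_window m i' j K hK1, cc_succ_window m i j' K hK2]
    set a : ℤ → ℝ := fun k => cc r m (k - i) with ha
    set b : ℤ → ℝ := fun k => cc r m (k - i') with hb
    set p : ℤ → ℝ := fun k => vv r (j - k) with hp
    set q : ℤ → ℝ := fun k => vv r (j' - k) with hq
    set T : ℤ → ℤ → ℝ := fun k k' => a k * p k * (b k' * q k') - a k * q k * (b k' * p k')
      with hT
    set H : ℤ → ℤ → ℝ := fun k k' => (a k * b k' - a k' * b k) * (p k * q k' - p k' * q k)
      with hH
    have key : ∀ k k', 0 ≤ H k k' := by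
      intro k k'
      rcases le_total k k' with h | h
      · have h1 := ih i i' k k' hi h
        have h2 := tn2_vv (r := r) k k' j j' h hj
        simp only [hH, ha, hb, hp, hq]
        nlinarith [h1, h2]
      · have h1 := ih i i' k' k hi h
        have h2 := tn2_vv (r := r) k' k j j' h hj
        simp only [hH, ha, hb, hp, hq]
        nlinarith [h1, h2]
    have hdiff : (∑ k ∈ K, a k * p k) * (∑ k ∈ K, b k * q k)
        - (∑ k ∈ K, a k * q k) * (∑ k ∈ K, b k * p k) = ∑ k ∈ K, ∑ k' ∈ K, T k k' := by
      rw [Finset.sum_mul_sum, Finset.sum_mul_sum, ← Finset.sum_sub_distrib]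
      refine Finset.sum_congr rfl fun k _ => ?_
      rw [← Finset.sum_sub_distrib]
    have h2 : ∑ k ∈ K, ∑ k' ∈ K, H k k' = 2 * ∑ k ∈ K, ∑ k' ∈ K, T k k' := by
      have e1 : ∀ k k', H k k' = T k k' + T k' k := by
        intro k k'; simp only [hH, hT]; ring
      calc ∑ k ∈ K, ∑ k' ∈ K, H k k'
          = ∑ k ∈ K, ∑ k' ∈ K, (T k k' + T k' k) := by
            refine Finset.sum_congr rfl fun k _ => Finset.sum_congr rfl fun k' _ => e1 k k'
        _ = (∑ k ∈ K, ∑ k' ∈ K, T k k') + ∑ k ∈ K, ∑ k' ∈ K, T k' k := by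
            rw [← Finset.sum_add_distrib]
            refine Finset.sum_congr rfl fun k _ => ?_
            rw [← Finset.sum_add_distrib]
        _ = (∑ k ∈ K, ∑ k' ∈ K, T k k') + ∑ k ∈ K, ∑ k' ∈ K, T k k' := by
            rw [Finset.sum_comm (f := fun k k' => T k' k)]
        _ = 2 * ∑ k ∈ K, ∑ k' ∈ K, T k k' := by ring
    have h3 : 0 ≤ ∑ k ∈ K, ∑ k' ∈ K, H k k' :=
      Finset.sum_nonneg fun k _ => Finset.sum_nonneg fun k' _ => key k k'
    nlinarith [hdiff, h2, h3]

/-- adjacent-row inequality -/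
lemma cc_adjacent (m : ℕ) (k l : ℤ) (hkl : k ≤ l) :
    cc r (m+1) k * cc r m l ≤ cc r m k * cc r (m+1) l := by
  rw [cc_succ, cc_succ, Finset.sum_mul, Finset.mul_sum]
  refine Finset.sum_le_sum fun s hs => ?_
  simp only [Finset.mem_Icc] at hs
  have := tn2_cc (r := r) m 0 s k l hs.1 hkl
  calc cc r m (k - s) * cc r m l = cc r m l * cc r m (k-s) := mul_comm _ _
    _ ≤ cc r m k * cc r m (l - s) := by simpa using this

/-- cross-row total nonnegativity -/
lemma cc_cross (a b : ℕ) (hab : a ≤ b) (k l : ℤ) (hkl : k ≤ l) :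
    cc r b k * cc r a l ≤ cc r a k * cc r b l := by
  induction b with
  | zero => have h0 : a = 0 := by omega
            subst h0; exact le_rfl
  | succ b ih =>
    rcases Nat.eq_or_lt_of_le hab with h | h
    · subst h; exact le_rfl
    · have hab' : a ≤ b := by omega
      have IH := ih hab'
      have ADJ := cc_adjacent (r := r) b k l hkl
      -- chain: cc (b+1) k * cc a l ≤ cc a k * cc (b+1) l
      by_cases hbl : cc r b l = 0
      · rcases lt_or_ge l 0 with hl | hl
        · have : cc r (b+1) k = 0 := cc_neg _ _ (by omega)
          rw [this, zero_mul]
          exact mul_nonneg (cc_nonneg _ _) (cc_nonneg _ _)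
        · have hlb : (r:ℤ) * b < l := by
            by_contra hcon
            push_neg at hcon
            exact absurd (cc_pos b l hl hcon) (by rw [hbl]; exact lt_irrefl 0)
          have : cc r a l = 0 := cc_gt _ _ (by
            have hc : ((a:ℤ)) ≤ (b:ℤ) := by exact_mod_cast hab'
            have : (r:ℤ) * a ≤ (r:ℤ) * b :=
              mul_le_mul_of_nonneg_left hc (by positivity)
            omega)
          rw [this, mul_zero]
          exact mul_nonneg (cc_nonneg _ _) (cc_nonneg _ _)
      · have hblpos : 0 < cc r b l := lt_of_le_of_ne (cc_nonneg _ _) (Ne.symm hbl)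
        have step1 : cc r (b+1) k * cc r b l * cc r a l ≤ cc r b k * cc r (b+1) l * cc r a l :=
          mul_le_mul_of_nonneg_right ADJ (cc_nonneg _ _)
        have step2 : cc r b k * cc r a l * cc r (b+1) l ≤ cc r a k * cc r b l * cc r (b+1) l :=
          mul_le_mul_of_nonneg_right IH (cc_nonneg _ _)
        have : cc r (b+1) k * cc r a l * cc r b l ≤ cc r a k * cc r (b+1) l * cc r b l := by
          nlinarith [step1, step2]
        exact le_of_mul_le_mul_right (by nlinarith [this]) hblpos


lemma slice (t : ℕ) (a b : ℕ) (hab : b ≤ a) (j : ℤ) (s : ℤ) (hs0 : 0 ≤ s) :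
    ∑ k ∈ Finset.Icc (0:ℤ) j, (if 0 ≤ k ∧ k ≤ (t:ℤ) then cc r a (k - s) else 0) *
        (if 0 ≤ j - k ∧ j - k ≤ (t:ℤ) then cc r b (j - k) else 0)
    ≤ ∑ k ∈ Finset.Icc (0:ℤ) j, (if 0 ≤ k ∧ k ≤ (t:ℤ) then cc r a k else 0) *
        (if 0 ≤ j - k ∧ j - k ≤ (t:ℤ) then cc r b (j - k - s) else 0) := by
  set φ : ℤ → ℝ := fun k => cc r a k * cc r b (j - s - k) with hφ
  set A : Finset ℤ := Finset.Icc (j - (t:ℤ)) (t:ℤ) with hA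
  set B : Finset ℤ := Finset.Icc (j - (t:ℤ) - s) ((t:ℤ) - s) with hB
  set e1 : ℤ := min (j - (t:ℤ) - s) 0 with he1
  set e2 : ℤ := max (t:ℤ) j with he2
  set E : Finset ℤ := Finset.Icc e1 e2 with hE
  have hIE : Finset.Icc (0:ℤ) j ⊆ E := by
    intro k hk; simp only [Finset.mem_Icc, hE] at *; omega
  -- RHS = ∑_A φ
  have hRHS : ∑ k ∈ Finset.Icc (0:ℤ) j, (if 0 ≤ k ∧ k ≤ (t:ℤ) then cc r a k else 0) *
        (if 0 ≤ j - k ∧ j - k ≤ (t:ℤ) then cc r b (j - k - s) else 0) = ∑ k ∈ A, φ k := by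
    rw [Finset.sum_subset hIE]
    · have hterm : ∀ k, (if 0 ≤ k ∧ k ≤ (t:ℤ) then cc r a k else 0) *
          (if 0 ≤ j - k ∧ j - k ≤ (t:ℤ) then cc r b (j - k - s) else 0)
          = if k ∈ A then φ k else 0 := by
        intro k
        by_cases h1 : 0 ≤ k ∧ k ≤ (t:ℤ)
        · by_cases h2 : 0 ≤ j - k ∧ j - k ≤ (t:ℤ)
          · rw [if_pos h1, if_pos h2, if_pos (by simp only [hA, Finset.mem_Icc]; omega)]
            simp only [hφ]
            congr 1
            ring
          · rw [if_neg h2, mul_zero]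
            split
            · next hmem =>
                simp only [hA, Finset.mem_Icc] at hmem
                have : j - s - k < 0 := by omega
                simp only [hφ, cc_neg b _ this, mul_zero]
            · rfl
        · rw [if_neg h1, zero_mul]
          split
          · next hmem =>
              simp only [hA, Finset.mem_Icc] at hmem
              have : k < 0 := by omega
              simp only [hφ, cc_neg a _ this, zero_mul]
          · rfl
      calc ∑ k ∈ E, (if 0 ≤ k ∧ k ≤ (t:ℤ) then cc r a k else 0) *
            (if 0 ≤ j - k ∧ j - k ≤ (t:ℤ) then cc r b (j - k - s) else 0)
          = ∑ k ∈ E, (if k ∈ A then φ k else 0) :=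
            Finset.sum_congr rfl fun k _ => hterm k
        _ = ∑ k ∈ E ∩ A, φ k := Finset.sum_ite_mem E A φ
        _ = ∑ k ∈ A, φ k := by
            congr 1
            rw [Finset.inter_eq_right]
            intro k hk; simp only [Finset.mem_Icc, hA, hE] at *; omega
    · intro k hkE hk
      simp only [Finset.mem_Icc, not_and_or, not_le] at hk
      rcases hk with h | h
      · rw [if_neg (by omega), zero_mul]
      · have hz : (if 0 ≤ j - k ∧ j - k ≤ (t:ℤ) then cc r b (j - k - s) else 0) = 0 :=
          if_neg (by omega)
        rw [hz, mul_zero]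
  -- LHS = ∑_B φ
  have hLHS : ∑ k ∈ Finset.Icc (0:ℤ) j, (if 0 ≤ k ∧ k ≤ (t:ℤ) then cc r a (k - s) else 0) *
        (if 0 ≤ j - k ∧ j - k ≤ (t:ℤ) then cc r b (j - k) else 0) = ∑ k ∈ B, φ k := by
    rw [Finset.sum_subset hIE]
    · have hmap : Finset.Icc e1 e2 = (Finset.Icc (e1 - s) (e2 - s)).map (addRightEmbedding s) := by
        rw [Finset.map_add_right_Icc]
        congr 1 <;> ring
      have hshift : ∑ k ∈ E, (if 0 ≤ k ∧ k ≤ (t:ℤ) then cc r a (k - s) else 0) *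
          (if 0 ≤ j - k ∧ j - k ≤ (t:ℤ) then cc r b (j - k) else 0)
          = ∑ k ∈ Finset.Icc (e1 - s) (e2 - s),
              (if 0 ≤ k + s ∧ k + s ≤ (t:ℤ) then cc r a k else 0) *
              (if 0 ≤ j - k - s ∧ j - k - s ≤ (t:ℤ) then cc r b (j - k - s) else 0) := by
        rw [hE, hmap, Finset.sum_map]
        refine Finset.sum_congr rfl fun k _ => ?_
        simp only [addRightEmbedding_apply,
          show ∀ z : ℤ, z + s - s = z from fun z => by ring,
          show ∀ z : ℤ, j - (z + s) = j - z - s from fun z => by ring]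
      have hterm2 : ∀ k : ℤ, (if 0 ≤ k + s ∧ k + s ≤ (t:ℤ) then cc r a k else 0) *
          (if 0 ≤ j - k - s ∧ j - k - s ≤ (t:ℤ) then cc r b (j - k - s) else 0)
          = if k ∈ B then φ k else 0 := by
        intro k
        by_cases h1 : 0 ≤ k + s ∧ k + s ≤ (t:ℤ)
        · by_cases h2 : 0 ≤ j - k - s ∧ j - k - s ≤ (t:ℤ)
          · rw [if_pos h1, if_pos h2, if_pos (by simp only [hB, Finset.mem_Icc]; omega)]
            simp only [hφ]
            congr 1
            ring
          · rw [if_neg h2, mul_zero]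
            split
            · next hmem =>
                simp only [hB, Finset.mem_Icc] at hmem
                have : j - s - k < 0 := by omega
                simp only [hφ, cc_neg b _ this, mul_zero]
            · rfl
        · rw [if_neg h1, zero_mul]
          split
          · next hmem =>
              simp only [hB, Finset.mem_Icc] at hmem
              have : k < 0 := by omega
              simp only [hφ, cc_neg a _ this, zero_mul]
          · rfl
      calc ∑ k ∈ E, (if 0 ≤ k ∧ k ≤ (t:ℤ) then cc r a (k - s) else 0) *
            (if 0 ≤ j - k ∧ j - k ≤ (t:ℤ) then cc r b (j - k) else 0)
          = ∑ k ∈ Finset.Icc (e1 - s) (e2 - s),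
              (if 0 ≤ k + s ∧ k + s ≤ (t:ℤ) then cc r a k else 0) *
              (if 0 ≤ j - k - s ∧ j - k - s ≤ (t:ℤ) then cc r b (j - k - s) else 0) := hshift
        _ = ∑ k ∈ Finset.Icc (e1 - s) (e2 - s), (if k ∈ B then φ k else 0) :=
            Finset.sum_congr rfl fun k _ => hterm2 k
        _ = ∑ k ∈ Finset.Icc (e1 - s) (e2 - s) ∩ B, φ k := Finset.sum_ite_mem _ B φ
        _ = ∑ k ∈ B, φ k := by
            congr 1
            rw [Finset.inter_eq_right]
            intro k hk; simp only [Finset.mem_Icc, hB] at *; omega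
    · intro k hkE hk
      simp only [Finset.mem_Icc, not_and_or, not_le] at hk
      rcases hk with h | h
      · rw [if_neg (by omega), zero_mul]
      · have hz : (if 0 ≤ j - k ∧ j - k ≤ (t:ℤ) then cc r b (j - k) else 0) = 0 :=
          if_neg (by omega)
        rw [hz, mul_zero]
  rw [hLHS, hRHS]
  have hsplitA := Finset.sum_inter_add_sum_sdiff A B φ
  have hsplitB := Finset.sum_inter_add_sum_sdiff B A φ
  rw [Finset.inter_comm] at hsplitB
  have hBA : ∑ k ∈ B \ A, φ k = ∑ k ∈ A \ B, φ (j - s - k) := by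
    refine Finset.sum_nbij' (fun k => j - s - k) (fun k => j - s - k) ?_ ?_ ?_ ?_ ?_
    · intro k hk
      simp only [Finset.mem_sdiff, Finset.mem_Icc, hA, hB] at *; omega
    · intro k hk
      simp only [Finset.mem_sdiff, Finset.mem_Icc, hA, hB] at *; omega
    · intro k _; ring
    · intro k _; ring
    · intro k _
      rw [show j - s - (j - s - k) = k from by ring]
  have hterm3 : ∀ k ∈ A \ B, φ (j - s - k) ≤ φ k := by
    intro k hk
    simp only [Finset.mem_sdiff, Finset.mem_Icc, hA, hB, not_and_or, not_le] at hk
    have hkk : j - s - k ≤ k := by omega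
    have hcross := cc_cross (r := r) b a hab (j - s - k) k hkk
    simp only [hφ]
    rw [show j - s - (j - s - k) = k from by ring]
    calc cc r a (j - s - k) * cc r b k ≤ cc r b (j - s - k) * cc r a k := hcross
      _ = cc r a k * cc r b (j - s - k) := by ring
  have hle : ∑ k ∈ A \ B, φ (j - s - k) ≤ ∑ k ∈ A \ B, φ k :=
    Finset.sum_le_sum hterm3
  linarith

lemma pair_int (t : ℕ) (a b : ℕ) (hab : b ≤ a) (j : ℤ) :
    ∑ k ∈ Finset.Icc (0:ℤ) j, (if 0 ≤ k ∧ k ≤ (t:ℤ) then cc r (a+1) k else 0) *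
        (if 0 ≤ j - k ∧ j - k ≤ (t:ℤ) then cc r b (j - k) else 0)
    ≤ ∑ k ∈ Finset.Icc (0:ℤ) j, (if 0 ≤ k ∧ k ≤ (t:ℤ) then cc r a k else 0) *
        (if 0 ≤ j - k ∧ j - k ≤ (t:ℤ) then cc r (b+1) (j - k) else 0) := by
  have expand : ∀ (m : ℕ) (x : ℤ), (if 0 ≤ x ∧ x ≤ (t:ℤ) then cc r (m+1) x else 0)
      = ∑ s ∈ Finset.Icc (0:ℤ) (r:ℤ), (if 0 ≤ x ∧ x ≤ (t:ℤ) then cc r m (x - s) else 0) := by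
    intro m x
    split_ifs with h
    · exact cc_succ m x
    · simp
  calc ∑ k ∈ Finset.Icc (0:ℤ) j, (if 0 ≤ k ∧ k ≤ (t:ℤ) then cc r (a+1) k else 0) *
        (if 0 ≤ j - k ∧ j - k ≤ (t:ℤ) then cc r b (j - k) else 0)
      = ∑ s ∈ Finset.Icc (0:ℤ) (r:ℤ), ∑ k ∈ Finset.Icc (0:ℤ) j,
          (if 0 ≤ k ∧ k ≤ (t:ℤ) then cc r a (k - s) else 0) *
          (if 0 ≤ j - k ∧ j - k ≤ (t:ℤ) then cc r b (j - k) else 0) := by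
        rw [Finset.sum_comm]
        refine Finset.sum_congr rfl fun k _ => ?_
        rw [expand, Finset.sum_mul]
    _ ≤ ∑ s ∈ Finset.Icc (0:ℤ) (r:ℤ), ∑ k ∈ Finset.Icc (0:ℤ) j,
          (if 0 ≤ k ∧ k ≤ (t:ℤ) then cc r a k else 0) *
          (if 0 ≤ j - k ∧ j - k ≤ (t:ℤ) then cc r b (j - k - s) else 0) := by
        refine Finset.sum_le_sum fun s hs => ?_
        simp only [Finset.mem_Icc] at hs
        exact slice t a b hab j s hs.1
    _ = ∑ k ∈ Finset.Icc (0:ℤ) j, (if 0 ≤ k ∧ k ≤ (t:ℤ) then cc r a k else 0) *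
          (if 0 ≤ j - k ∧ j - k ≤ (t:ℤ) then cc r (b+1) (j - k) else 0) := by
        rw [Finset.sum_comm]
        refine Finset.sum_congr rfl fun k _ => ?_
        rw [expand, Finset.mul_sum]

noncomputable def qq (r : ℕ) : ℕ → ℝ := fun k => if k ≤ r then 1 else 0

noncomputable def UQ (r : ℕ) : PowerSeries ℝ := PowerSeries.mk (qq r)

lemma sum_Icc_int_eq (N : ℕ) (g : ℤ → ℝ) :
    ∑ s ∈ Finset.Icc (0:ℤ) (N:ℤ), g s = ∑ i ∈ Finset.range (N+1), g (i:ℤ) := by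
  refine Finset.sum_nbij' (fun s => s.toNat) (fun i => (i:ℤ)) ?_ ?_ ?_ ?_ ?_
  · intro s hs; simp only [Finset.mem_Icc, Finset.mem_range] at *; omega
  · intro i hi; simp only [Finset.mem_Icc, Finset.mem_range] at *; omega
  · intro s hs; simp only [Finset.mem_Icc] at hs
    exact Int.toNat_of_nonneg hs.1
  · intro i _; simp
  · intro s hs; simp only [Finset.mem_Icc] at hs
    rw [Int.toNat_of_nonneg hs.1]

lemma coeff_UQ_pow (m n : ℕ) : PowerSeries.coeff n (UQ r ^ m) = cc r m (n:ℤ) := by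
  induction m generalizing n with
  | zero =>
    simp only [pow_zero, PowerSeries.coeff_one]
    rw [show cc r 0 (n:ℤ) = if (n:ℤ) = 0 then 1 else 0 from rfl]
    by_cases h : n = 0 <;> simp [h]
  | succ m ih =>
    rw [pow_succ']
    rw [PowerSeries.coeff_mul]
    rw [Finset.Nat.sum_antidiagonal_eq_sum_range_succ_mk]
    have hL : ∀ i ∈ Finset.range (n+1),
        PowerSeries.coeff (i, n - i).1 (UQ r) * PowerSeries.coeff (i, n - i).2 (UQ r ^ m)
        = if i ≤ r ∧ i ≤ n then cc r m ((n:ℤ) - i) else 0 := by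
      intro i hi
      simp only [Finset.mem_range] at hi
      have hin : i ≤ n := by omega
      have hcast : ((n - i : ℕ) : ℤ) = (n:ℤ) - (i:ℤ) := by omega
      have hq : PowerSeries.coeff i (UQ r) = qq r i := by
        rw [UQ, PowerSeries.coeff_mk]
      rw [show ((i, n-i).1) = i from rfl, show ((i, n-i).2) = n - i from rfl, hq, ih, hcast]
      unfold qq
      by_cases h : i ≤ r <;> simp [h, hin]
    rw [Finset.sum_congr rfl hL]
    have hR : cc r (m+1) (n:ℤ) = ∑ i ∈ Finset.range (r+1), cc r m ((n:ℤ) - i) := by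
      rw [cc_succ, sum_Icc_int_eq r (fun s => cc r m ((n:ℤ) - s))]
    rw [hR]
    have hR2 : ∀ i ∈ Finset.range (r+1),
        cc r m ((n:ℤ) - i) = if i ≤ r ∧ i ≤ n then cc r m ((n:ℤ) - i) else 0 := by
      intro i hi
      simp only [Finset.mem_range] at hi
      have hir : i ≤ r := by omega
      by_cases h : i ≤ n
      · simp [hir, h]
      · rw [if_neg (by tauto), cc_neg m _ (by omega)]
    rw [Finset.sum_congr rfl hR2]
    rw [Finset.sum_subset (Finset.range_subset_range.mpr (by omega : n+1 ≤ n+r+1))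
        (fun i _ hi => by
          simp only [Finset.mem_range, not_lt] at hi
          rw [if_neg (by omega)]),
      Finset.sum_subset (Finset.range_subset_range.mpr (by omega : r+1 ≤ n+r+1))
        (fun i _ hi => by
          simp only [Finset.mem_range, not_lt] at hi
          rw [if_neg (by omega)])]

noncomputable def Tq (r m t : ℕ) : Polynomial ℝ := PowerSeries.trunc (t+1) (UQ r ^ m)

lemma coeff_Tq (m t k : ℕ) :
    (Tq r m t).coeff k = if k ≤ t then cc r m (k:ℤ) else 0 := by
  rw [Tq, PowerSeries.coeff_trunc, coeff_UQ_pow]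
  congr 1
  simp [Nat.lt_succ_iff]

lemma coeff_Tq_mul (a b t j : ℕ) :
    (Tq r a t * Tq r b t).coeff j
    = ∑ k ∈ Finset.Icc (0:ℤ) (j:ℤ), (if 0 ≤ k ∧ k ≤ (t:ℤ) then cc r a k else 0) *
        (if 0 ≤ (j:ℤ) - k ∧ (j:ℤ) - k ≤ (t:ℤ) then cc r b ((j:ℤ) - k) else 0) := by
  rw [Polynomial.coeff_mul, Finset.Nat.sum_antidiagonal_eq_sum_range_succ_mk]
  rw [sum_Icc_int_eq j (fun k => (if 0 ≤ k ∧ k ≤ (t:ℤ) then cc r a k else 0) *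
        (if 0 ≤ (j:ℤ) - k ∧ (j:ℤ) - k ≤ (t:ℤ) then cc r b ((j:ℤ) - k) else 0))]
  refine Finset.sum_congr rfl fun i hi => ?_
  simp only [Finset.mem_range] at hi
  have hin : i ≤ j := by omega
  rw [coeff_Tq, coeff_Tq]
  have h1 : ((j - i : ℕ) : ℤ) = (j:ℤ) - (i:ℤ) := by omega
  congr 1
  · by_cases h : i ≤ t
    · rw [if_pos h, if_pos (by constructor <;> omega)]
    · rw [if_neg h, if_neg (by omega)]
  · by_cases h : j - i ≤ t
    · rw [if_pos h, if_pos (by omega), h1]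
    · rw [if_neg h, if_neg (by omega)]

/-- The two-row inequality for truncated powers. -/
lemma pair (a b t j : ℕ) (hab : b ≤ a) :
    (Tq r (a+1) t * Tq r b t).coeff j ≤ (Tq r a t * Tq r (b+1) t).coeff j := by
  rw [coeff_Tq_mul, coeff_Tq_mul]
  exact pair_int t a b hab (j:ℤ)


/-- the uniform pmf -/
def punif (r : ℕ) : ℕ → ℝ := fun k => if k ≤ r then (1:ℝ)/(r+1) else 0

lemma mkp_eq (r : ℕ) :
    PowerSeries.mk (punif r) = PowerSeries.C (((r:ℝ)+1)⁻¹) * UQ r := by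
  ext n
  rw [PowerSeries.coeff_mk, PowerSeries.coeff_C_mul, UQ, PowerSeries.coeff_mk]
  unfold punif qq
  split
  · rw [mul_one, one_div]
  · rw [mul_zero]

lemma trunc_C_mul (n : ℕ) (a : ℝ) (f : PowerSeries ℝ) :
    PowerSeries.trunc n (PowerSeries.C a * f) = Polynomial.C a * PowerSeries.trunc n f := by
  apply Polynomial.ext
  intro k
  rw [Polynomial.coeff_C_mul, PowerSeries.coeff_trunc, PowerSeries.coeff_trunc,
    PowerSeries.coeff_C_mul]
  split <;> simp

/-- truncated power factor of the uniform pmf -/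
lemma trunc_punif_pow (r t m : ℕ) :
    PowerSeries.trunc (t+1) (PowerSeries.mk (punif r) ^ m)
      = Polynomial.C ((((r:ℝ)+1)⁻¹) ^ m) * Tq r m t := by
  rw [mkp_eq, mul_pow, ← map_pow, trunc_C_mul, Tq]

def Gp (r : ℕ) (lam : PartitionSeq) (t B : ℕ) : Polynomial ℝ :=
  ∏ i ∈ Finset.Icc 1 B, Tq r (lam.part i) t

/-- a common bound for the support -/
lemma exists_bound (lam mu : PartitionSeq) :
    ∃ B : ℕ, (∀ i, lam.part i ≠ 0 → i ≤ B) ∧ (∀ i, mu.part i ≠ 0 → i ≤ B) := by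
  obtain ⟨B, hB⟩ := (lam.finSupp.union mu.finSupp).bddAbove
  exact ⟨B, fun i hi => hB (Set.mem_union_left _ hi), fun i hi => hB (Set.mem_union_right _ hi)⟩

lemma weight_eq_sum (lam : PartitionSeq) (B : ℕ) (hB : ∀ i, lam.part i ≠ 0 → i ≤ B) :
    lam.weight = ∑ i ∈ Finset.Icc 1 B, lam.part i := by
  apply finsum_eq_sum_of_support_subset
  intro i hi
  simp only [Function.mem_support] at hi
  simp only [Finset.coe_Icc, Set.mem_Icc]
  refine ⟨?_, hB i hi⟩
  by_contra h
  exact hi (by rw [show i = 0 by omega, lam.zero])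

lemma fPoly_eq (r : ℕ) (lam : PartitionSeq) (t B : ℕ) (hB : ∀ i, lam.part i ≠ 0 → i ≤ B) :
    fPoly lam (punif r) t = Polynomial.C ((((r:ℝ)+1)⁻¹) ^ lam.weight) * Gp r lam t B := by
  rw [fPoly]
  have h1 : (∏ᶠ i : ℕ, PowerSeries.trunc (t + 1) (PowerSeries.mk (punif r) ^ lam.part i))
      = ∏ i ∈ Finset.Icc 1 B, PowerSeries.trunc (t + 1) (PowerSeries.mk (punif r) ^ lam.part i) := by
    apply finprod_eq_prod_of_mulSupport_subset
    intro i hi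
    simp only [Function.mem_mulSupport] at hi
    simp only [Finset.coe_Icc, Set.mem_Icc]
    by_contra h
    have hpart : lam.part i = 0 := by
      rcases Nat.lt_or_ge i 1 with h' | h'
      · rw [show i = 0 by omega, lam.zero]
      · by_contra hne
        exact h ⟨h', hB i hne⟩
    apply hi
    rw [hpart, pow_zero, PowerSeries.trunc_one]
  rw [h1]
  have h2 : ∀ i ∈ Finset.Icc 1 B, PowerSeries.trunc (t + 1) (PowerSeries.mk (punif r) ^ lam.part i)
      = Polynomial.C ((((r:ℝ)+1)⁻¹) ^ lam.part i) * Tq r (lam.part i) t :=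
    fun i _ => trunc_punif_pow r t (lam.part i)
  rw [Finset.prod_congr rfl h2, Finset.prod_mul_distrib, ← map_prod, Finset.prod_pow_eq_pow_sum]
  rw [weight_eq_sum lam B hB, Gp]

lemma probE_eq (r : ℕ) (lam : PartitionSeq) (t B j : ℕ) (hB : ∀ i, lam.part i ≠ 0 → i ≤ B) :
    probE (punif r) lam j t = (((r:ℝ)+1)⁻¹) ^ lam.weight * (Gp r lam t B).coeff j := by
  rw [probE, fPoly_eq r lam t B hB, Polynomial.coeff_C_mul]


/-- nonnegative coefficients, positive up to `D`, zero above `D` -/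
def PosUpTo (f : Polynomial ℝ) (D : ℕ) : Prop :=
  (∀ k, k ≤ D → 0 < f.coeff k) ∧ (∀ k, D < k → f.coeff k = 0) ∧ ∀ k, 0 ≤ f.coeff k

lemma posUpTo_one : PosUpTo 1 0 := by
  refine ⟨fun k hk => ?_, fun k hk => ?_, fun k => ?_⟩
  · rw [show k = 0 by omega]; simp
  · rw [Polynomial.coeff_one, if_neg (by omega)]
  · rw [Polynomial.coeff_one]; split <;> norm_num

lemma posUpTo_mul {f g : Polynomial ℝ} {D E : ℕ} (hf : PosUpTo f D) (hg : PosUpTo g E) :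
    PosUpTo (f * g) (D + E) := by
  obtain ⟨hf1, hf2, hf3⟩ := hf
  obtain ⟨hg1, hg2, hg3⟩ := hg
  refine ⟨fun k hk => ?_, fun k hk => ?_, fun k => ?_⟩
  · rw [Polynomial.coeff_mul, Finset.Nat.sum_antidiagonal_eq_sum_range_succ_mk]
    have hmem : min k D ∈ Finset.range (k+1) := by simp only [Finset.mem_range]; omega
    refine Finset.sum_pos' (fun i _ => mul_nonneg (hf3 _) (hg3 _)) ⟨min k D, hmem, ?_⟩
    exact mul_pos (hf1 _ (by omega)) (hg1 _ (by omega))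
  · rw [Polynomial.coeff_mul]
    refine Finset.sum_eq_zero fun x hx => ?_
    rw [Finset.HasAntidiagonal.mem_antidiagonal] at hx
    rcases Nat.lt_or_ge D x.1 with h | h
    · rw [hf2 _ h, zero_mul]
    · rw [hg2 _ (by omega), mul_zero]
  · rw [Polynomial.coeff_mul]
    exact Finset.sum_nonneg fun x _ => mul_nonneg (hf3 _) (hg3 _)

lemma posUpTo_prod {ι : Type*} [DecidableEq ι] (s : Finset ι) (g : ι → Polynomial ℝ) (D : ι → ℕ)
    (h : ∀ i ∈ s, PosUpTo (g i) (D i)) :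
    PosUpTo (∏ i ∈ s, g i) (∑ i ∈ s, D i) := by
  induction s using Finset.induction_on with
  | empty => simpa using posUpTo_one
  | insert a s' hnotmem ih =>
    rw [Finset.prod_insert hnotmem, Finset.sum_insert hnotmem]
    exact posUpTo_mul (h a (Finset.mem_insert_self a s'))
      (ih fun i hi => h i (Finset.mem_insert_of_mem hi))

lemma posUpTo_Tq (r m t : ℕ) : PosUpTo (Tq r m t) (min t (r * m)) := by
  refine ⟨fun k hk => ?_, fun k hk => ?_, fun k => ?_⟩
  · rw [coeff_Tq, if_pos (by omega)]
    refine cc_pos m k (by positivity) ?_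
    have : k ≤ r * m := by omega
    exact_mod_cast this
  · rw [coeff_Tq]
    split
    · refine cc_gt m k ?_
      have : r * m < k := by omega
      exact_mod_cast this
    · rfl
  · rw [coeff_Tq]
    split
    · exact cc_nonneg _ _
    · exact le_rfl

lemma coeff_nonneg_Tq (r m t k : ℕ) : 0 ≤ (Tq r m t).coeff k := (posUpTo_Tq r m t).2.2 k

/-- multiplying a coefficientwise inequality by a coefficientwise-nonnegative polynomial -/
lemma coeff_mul_mono {F G H : Polynomial ℝ} (hFG : ∀ k, F.coeff k ≤ G.coeff k)
    (hH : ∀ k, 0 ≤ H.coeff k) (j : ℕ) :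
    (F * H).coeff j ≤ (G * H).coeff j := by
  rw [Polynomial.coeff_mul, Polynomial.coeff_mul]
  exact Finset.sum_le_sum fun x _ => mul_le_mul_of_nonneg_right (hFG _) (hH _)

/-- splitting out two factors of a product -/
lemma prod_split {ι : Type*} [DecidableEq ι] (s : Finset ι) (g : ι → Polynomial ℝ) {u v : ι}
    (hu : u ∈ s) (hv : v ∈ s) (huv : u ≠ v) :
    ∏ i ∈ s, g i = g u * g v * ∏ i ∈ (s.erase u).erase v, g i := by
  rw [← Finset.mul_prod_erase s g hu,
      ← Finset.mul_prod_erase (s.erase u) g (Finset.mem_erase.mpr ⟨Ne.symm huv, hv⟩), mul_assoc]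


/-- partial sums -/
def Sm (lam : PartitionSeq) (j : ℕ) : ℕ := ∑ i ∈ Finset.Icc 1 j, lam.part i

lemma Sm_zero (lam : PartitionSeq) : Sm lam 0 = 0 := by simp [Sm]

lemma Sm_succ (lam : PartitionSeq) (j : ℕ) :
    Sm lam (j+1) = Sm lam j + lam.part (j+1) :=
  Finset.sum_Icc_succ_top (by omega) _

lemma Sm_split (lam : PartitionSeq) {a b : ℕ} (hab : a ≤ b) :
    Sm lam b = Sm lam a + ∑ k ∈ Finset.Ioc a b, lam.part k := by
  rw [Sm, Sm, show Finset.Icc 1 b = Finset.Ioc 0 b from rfl,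
    show Finset.Icc 1 a = Finset.Ioc 0 a from rfl]
  exact (Finset.sum_Ioc_consecutive _ (Nat.zero_le a) hab).symm

lemma antitone_of_adj (g : ℕ → ℕ) (h : ∀ k, 1 ≤ k → g (k+1) ≤ g k) :
    ∀ ⦃i j : ℕ⦄, 1 ≤ i → i ≤ j → g j ≤ g i := by
  intro i j h1 hij
  induction j, hij using Nat.le_induction with
  | base => exact le_rfl
  | succ j hij ih => exact le_trans (h j (le_trans h1 hij)) ih

def movePart (lam : PartitionSeq) (u v : ℕ) : ℕ → ℕ := fun k =>
  if k = u then lam.part u - 1 else if k = v then lam.part v + 1 else lam.part k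

variable {lam : PartitionSeq} {u v : ℕ}

lemma movePart_adj (h1u : 1 ≤ u) (huv : u < v)
    (hdec : lam.part (u+1) < lam.part u) (hgap2 : lam.part v + 2 ≤ lam.part u)
    (hmin : ∀ k, u < k → k < v → lam.part u ≤ lam.part k + 1)
    (k : ℕ) (hk : 1 ≤ k) : movePart lam u v (k+1) ≤ movePart lam u v k := by
  have hadj : lam.part (k+1) ≤ lam.part k := lam.antitone hk (Nat.le_succ k)
  unfold movePart
  by_cases hA : k + 1 = u
  · subst hA
    rw [if_pos rfl, if_neg (by omega), if_neg (by omega)]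
    omega
  · by_cases hC : k = u
    · subst hC
      rw [if_neg hA, if_pos rfl]
      by_cases hB : k + 1 = v
      · subst hB
        rw [if_pos rfl]
        omega
      · rw [if_neg hB]
        omega
    · by_cases hB : k + 1 = v
      · subst hB
        rw [if_neg hA, if_pos rfl, if_neg hC, if_neg (show k ≠ k + 1 by omega)]
        rcases le_or_gt k u with h | h
        · have h2 := lam.antitone hk h
          omega
        · have h3 := hmin k h (by omega)
          omega
      · by_cases hD : k = v
        · subst hD
          rw [if_neg hA, if_neg hB, if_neg hC, if_pos rfl]
          omega
        · rw [if_neg hA, if_neg hB, if_neg hC, if_neg hD]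
          exact hadj

def moved (lam : PartitionSeq) (u v : ℕ) (h1u : 1 ≤ u) (huv : u < v)
    (hdec : lam.part (u+1) < lam.part u) (hgap2 : lam.part v + 2 ≤ lam.part u)
    (hmin : ∀ k, u < k → k < v → lam.part u ≤ lam.part k + 1) : PartitionSeq where
  part := movePart lam u v
  zero := by unfold movePart; rw [if_neg (by omega), if_neg (by omega), lam.zero]
  antitone := antitone_of_adj _ (movePart_adj h1u huv hdec hgap2 hmin)
  finSupp := by
    refine Set.Finite.subset (lam.finSupp.union (Set.finite_singleton v)) ?_
    intro k hk
    simp only [Function.mem_support, movePart] at hk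
    by_cases h1 : k = u
    · subst h1
      left
      simp only [Function.mem_support]
      omega
    · by_cases h2 : k = v
      · right; simp [h2]
      · rw [if_neg h1, if_neg h2] at hk
        left
        simpa [Function.mem_support] using hk

lemma sum_movePart_lt (huv : u < v) (j : ℕ) (hj : j < u) :
    ∑ k ∈ Finset.Icc 1 j, movePart lam u v k = Sm lam j := by
  refine Finset.sum_congr rfl fun k hk => ?_
  simp only [Finset.mem_Icc] at hk
  unfold movePart
  rw [if_neg (by omega), if_neg (by omega)]

lemma sum_movePart_mid (h1u : 1 ≤ u) (huv : u < v) (hup : 1 ≤ lam.part u) (j : ℕ)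
    (hju : u ≤ j) (hjv : j < v) :
    (∑ k ∈ Finset.Icc 1 j, movePart lam u v k) + 1 = Sm lam j := by
  have hu : u ∈ Finset.Icc 1 j := by simp only [Finset.mem_Icc]; omega
  have h1 := Finset.add_sum_erase (Finset.Icc 1 j) (movePart lam u v) hu
  have h2 := Finset.add_sum_erase (Finset.Icc 1 j) lam.part hu
  have h3 : ∑ k ∈ (Finset.Icc 1 j).erase u, movePart lam u v k
      = ∑ k ∈ (Finset.Icc 1 j).erase u, lam.part k := by
    refine Finset.sum_congr rfl fun k hk => ?_
    simp only [Finset.mem_erase, Finset.mem_Icc] at hk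
    unfold movePart
    rw [if_neg hk.1, if_neg (by omega)]
  have h4 : movePart lam u v u = lam.part u - 1 := by unfold movePart; rw [if_pos rfl]
  rw [Sm] at *
  omega

lemma sum_movePart_ge (h1u : 1 ≤ u) (huv : u < v) (hup : 1 ≤ lam.part u) (j : ℕ)
    (hjv : v ≤ j) :
    ∑ k ∈ Finset.Icc 1 j, movePart lam u v k = Sm lam j := by
  have hu : u ∈ Finset.Icc 1 j := by simp only [Finset.mem_Icc]; omega
  have hv : v ∈ (Finset.Icc 1 j).erase u := by
    simp only [Finset.mem_erase, Finset.mem_Icc]; omega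
  have h1 := Finset.add_sum_erase (Finset.Icc 1 j) (movePart lam u v) hu
  have h2 := Finset.add_sum_erase (Finset.Icc 1 j) lam.part hu
  have h1' := Finset.add_sum_erase _ (movePart lam u v) hv
  have h2' := Finset.add_sum_erase _ lam.part hv
  have h3 : ∑ k ∈ ((Finset.Icc 1 j).erase u).erase v, movePart lam u v k
      = ∑ k ∈ ((Finset.Icc 1 j).erase u).erase v, lam.part k := by
    refine Finset.sum_congr rfl fun k hk => ?_
    simp only [Finset.mem_erase, Finset.mem_Icc] at hk
    unfold movePart
    rw [if_neg hk.2.1, if_neg hk.1]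
  have h4 : movePart lam u v u = lam.part u - 1 := by unfold movePart; rw [if_pos rfl]
  have h5 : movePart lam u v v = lam.part v + 1 := by
    unfold movePart; rw [if_neg (by omega), if_pos rfl]
  rw [Sm] at *
  omega


lemma moved_part (lam : PartitionSeq) (u v : ℕ) (h1u : 1 ≤ u) (huv : u < v)
    (hdec : lam.part (u+1) < lam.part u) (hgap2 : lam.part v + 2 ≤ lam.part u)
    (hmin : ∀ k, u < k → k < v → lam.part u ≤ lam.part k + 1) :
    (moved lam u v h1u huv hdec hgap2 hmin).part = movePart lam u v := rfl

def dmeasure (lam mu : PartitionSeq) : ℕ := ∑ᶠ j, (Sm lam j - Sm mu j)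

lemma dmeasure_eq_sum (lam mu : PartitionSeq) (B : ℕ)
    (hBl : ∀ i, lam.part i ≠ 0 → i ≤ B) (hBm : ∀ i, mu.part i ≠ 0 → i ≤ B)
    (hw : lam.weight = mu.weight) :
    dmeasure lam mu = ∑ j ∈ Finset.Icc 1 B, (Sm lam j - Sm mu j) := by
  apply finsum_eq_sum_of_support_subset
  intro j hj
  simp only [Function.mem_support] at hj
  simp only [Finset.coe_Icc, Set.mem_Icc]
  constructor
  · by_contra h
    have : j = 0 := by omega
    subst this
    rw [Sm_zero, Sm_zero] at hj
    exact hj rfl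
  · by_contra h
    push_neg at h
    have hl : Sm lam j = lam.weight :=
      (weight_eq_sum lam j (fun i hi => le_trans (hBl i hi) (by omega))).symm
    have hm : Sm mu j = mu.weight :=
      (weight_eq_sum mu j (fun i hi => le_trans (hBm i hi) (by omega))).symm
    rw [hl, hm, hw] at hj
    exact hj (by omega)

theorem forward_aux (r : ℕ) (mu : PartitionSeq) :
    ∀ d (lam : PartitionSeq), lam.Dominates mu → dmeasure lam mu = d →
      ∀ j t : ℕ, probE (punif r) lam j t ≤ probE (punif r) mu j t := by
  intro d
  induction d using Nat.strong_induction_on with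
  | _ d ih =>
  intro lam hdom hd j t
  obtain ⟨B, hBl, hBm⟩ := exists_bound lam mu
  have hw := hdom.1
  by_cases h0 : d = 0
  · -- base case: partitions are equal
    subst h0
    rw [dmeasure_eq_sum lam mu B hBl hBm hw] at hd
    have hz : ∀ jj ∈ Finset.Icc 1 B, Sm lam jj - Sm mu jj = 0 :=
      (Finset.sum_eq_zero_iff.mp hd)
    have hSeq : ∀ jj, jj ≤ B → Sm lam jj = Sm mu jj := by
      intro jj hjj
      rcases Nat.eq_zero_or_pos jj with h | h
      · subst h; rw [Sm_zero, Sm_zero]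
      · have h1 := hz jj (by simp only [Finset.mem_Icc]; omega)
        have h2 := hdom.2 jj h
        rw [show (∑ i ∈ Finset.Icc 1 jj, mu.part i) = Sm mu jj from rfl,
          show (∑ i ∈ Finset.Icc 1 jj, lam.part i) = Sm lam jj from rfl] at h2
        omega
    have hpart : ∀ i, lam.part i = mu.part i := by
      intro i
      rcases Nat.eq_zero_or_pos i with h | h
      · subst h; rw [lam.zero, mu.zero]
      · rcases Nat.lt_or_ge B i with hBi | hBi
        · have hl : lam.part i = 0 := by
            by_contra hne; exact absurd (hBl i hne) (by omega)
          have hm : mu.part i = 0 := by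
            by_contra hne; exact absurd (hBm i hne) (by omega)
          rw [hl, hm]
        · obtain ⟨i', rfl⟩ : ∃ i', i = i' + 1 := ⟨i - 1, by omega⟩
          have e1 := Sm_succ lam i'
          have e2 := Sm_succ mu i'
          have e3 := hSeq i' (by omega)
          have e4 := hSeq (i' + 1) (by omega)
          omega
    have : fPoly lam (punif r) t = fPoly mu (punif r) t := by
      unfold fPoly
      exact finprod_congr fun i => by rw [hpart i]
    rw [probE, probE, this]
  · -- inductive step
    have hd0 : 0 < d := by omega
    -- find an index where the partial sums differ
    have hex : ∃ j0, Sm mu j0 < Sm lam j0 := by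
      by_contra hcon
      push_neg at hcon
      rw [dmeasure_eq_sum lam mu B hBl hBm hw] at hd
      have : ∀ jj ∈ Finset.Icc 1 B, Sm lam jj - Sm mu jj = 0 := by
        intro jj hjj
        have := hcon jj
        omega
      rw [Finset.sum_eq_zero this] at hd
      omega
    -- find the first index where parts differ
    have hidiff : ∃ i, lam.part i ≠ mu.part i := by
      by_contra hcon
      push_neg at hcon
      obtain ⟨j0, hj0⟩ := hex
      have : Sm lam j0 = Sm mu j0 :=
        Finset.sum_congr rfl fun k _ => hcon k
      omega
    obtain ⟨i, hi, hiless⟩ : ∃ i, lam.part i ≠ mu.part i ∧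
        ∀ k, k < i → lam.part k = mu.part k := by
      refine ⟨Nat.find hidiff, Nat.find_spec hidiff, fun k hk => ?_⟩
      by_contra hne
      exact absurd (Nat.find_min' hidiff hne) (by omega)
    have hi1 : 1 ≤ i := by
      rcases Nat.eq_zero_or_pos i with h | h
      · exfalso; apply hi; rw [h, lam.zero, mu.zero]
      · exact h
    have hSieq : Sm lam (i-1) = Sm mu (i-1) :=
      Finset.sum_congr rfl fun k hk => by
        simp only [Finset.mem_Icc] at hk
        exact hiless k (by omega)
    have hSi : Sm lam i = Sm lam (i-1) + lam.part i := by
      have := Sm_succ lam (i-1)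
      rw [show i - 1 + 1 = i by omega] at this
      exact this
    have hSi' : Sm mu i = Sm mu (i-1) + mu.part i := by
      have := Sm_succ mu (i-1)
      rw [show i - 1 + 1 = i by omega] at this
      exact this
    have hdomi := hdom.2 i hi1
    rw [show (∑ i_1 ∈ Finset.Icc 1 i, mu.part i_1) = Sm mu i from rfl,
      show (∑ i_1 ∈ Finset.Icc 1 i, lam.part i_1) = Sm lam i from rfl] at hdomi
    have hlgt : mu.part i < lam.part i := by omega
    have hiB : i ≤ B := hBl i (by omega)
    have hBp1 : lam.part (B+1) = 0 := by
      by_contra hne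
      exact absurd (hBl _ hne) (by omega)
    -- u : the last index with part equal to part i
    obtain ⟨u, hu_spec, hui, huB, hunext'⟩ : ∃ u, lam.part u = lam.part i ∧ i ≤ u ∧ u ≤ B ∧
        (u + 1 ≤ B → lam.part (u+1) ≠ lam.part i) := by
      refine ⟨Nat.findGreatest (fun k => lam.part k = lam.part i) B,
        Nat.findGreatest_spec (P := fun k => lam.part k = lam.part i) hiB rfl,
        Nat.le_findGreatest hiB rfl, Nat.findGreatest_le B, fun hc => ?_⟩
      exact Nat.findGreatest_is_greatest (P := fun k => lam.part k = lam.part i)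
        (Nat.lt_succ_self _) hc
    have h1u : 1 ≤ u := le_trans hi1 hui
    have hunext : lam.part (u+1) ≠ lam.part i := by
      by_cases hc : u + 1 ≤ B
      · exact hunext' hc
      · have : u = B := by omega
        rw [this, hBp1]
        omega
    have hudec : lam.part (u+1) < lam.part u := by
      have := lam.antitone h1u (by omega : u ≤ u + 1)
      rw [hu_spec]
      omega
    -- part u ≥ 2
    have hl2 : 2 ≤ lam.part u := by
      by_contra hcon
      push_neg at hcon
      have hli1 : lam.part i = 1 := by omega
      have hmi0 : mu.part i = 0 := by omega
      -- mu.weight = Sm mu (i-1)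
      have hmw : mu.weight = Sm mu (i-1) := by
        rw [weight_eq_sum mu B hBm, show (∑ i ∈ Finset.Icc 1 B, mu.part i) = Sm mu B from rfl,
          Sm_split mu (show i-1 ≤ B by omega)]
        have : ∑ k ∈ Finset.Ioc (i-1) B, mu.part k = 0 := by
          refine Finset.sum_eq_zero fun k hk => ?_
          simp only [Finset.mem_Ioc] at hk
          have := mu.antitone hi1 (show i ≤ k by omega)
          omega
        omega
      have hlw : Sm lam i ≤ lam.weight := by
        rw [weight_eq_sum lam B hBl, show (∑ i ∈ Finset.Icc 1 B, lam.part i) = Sm lam B from rfl,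
          Sm_split lam (show i ≤ B by omega)]
        omega
      omega
    -- v : the first index after u where part drops by ≥ 2
    have hvex : ∃ k, u < k ∧ lam.part k + 2 ≤ lam.part u := by
      refine ⟨B+1, by omega, ?_⟩
      rw [hBp1]
      omega
    obtain ⟨v, hv1, hv2, hvB, hvmin⟩ : ∃ v, u < v ∧ lam.part v + 2 ≤ lam.part u ∧ v ≤ B + 1 ∧
        ∀ k, u < k → k < v → lam.part u ≤ lam.part k + 1 := by
      refine ⟨Nat.find hvex, (Nat.find_spec hvex).1, (Nat.find_spec hvex).2,
        Nat.find_le ⟨by omega, by rw [hBp1]; omega⟩, fun k h1 h2 => ?_⟩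
      have h3 := Nat.find_min hvex h2
      push_neg at h3
      have := h3 h1
      omega
    have hv : u < v ∧ lam.part v + 2 ≤ lam.part u := ⟨hv1, hv2⟩
    -- the gap fact on [i, v)
    have hforall : ∀ k, i < k → k < v → mu.part k ≤ lam.part k := by
      intro k h1 h2
      have hmuk : mu.part k ≤ mu.part i := mu.antitone hi1 (by omega)
      rcases le_or_gt k u with hk | hk
      · have e1 : lam.part k ≤ lam.part i := lam.antitone hi1 (by omega)
        have e2 : lam.part u ≤ lam.part k := lam.antitone (by omega) hk
        omega
      · have := hvmin k hk h2
        omega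
    have hgap : ∀ jj, i ≤ jj → jj < v → Sm mu jj + 1 ≤ Sm lam jj := by
      intro jj hij
      induction jj, hij using Nat.le_induction with
      | base =>
        intro _
        omega
      | succ jj hij ih2 =>
        intro hjv
        have h1 := ih2 (by omega)
        have h2 := hforall (jj+1) (by omega) hjv
        rw [Sm_succ, Sm_succ]
        omega
    -- build the moved partition
    have hup1 : 1 ≤ lam.part u := by omega
    set lam' := moved lam u v h1u hv.1 hudec hv.2 hvmin with hlam'def
    have hlp : lam'.part = movePart lam u v := moved_part lam u v h1u hv.1 hudec hv.2 hvmin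
    set B1 := B + v + 1 with hB1def
    have hBl1 : ∀ k, lam.part k ≠ 0 → k ≤ B1 := fun k hk => le_trans (hBl k hk) (by omega)
    have hBm1 : ∀ k, mu.part k ≠ 0 → k ≤ B1 := fun k hk => le_trans (hBm k hk) (by omega)
    have hBl'1 : ∀ k, lam'.part k ≠ 0 → k ≤ B1 := by
      intro k hk
      rw [hlp] at hk
      unfold movePart at hk
      by_cases h1 : k = u
      · omega
      · by_cases h2 : k = v
        · omega
        · rw [if_neg h1, if_neg h2] at hk
          exact le_trans (hBl k hk) (by omega)
    -- partial sums of lam'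
    have hSm' : ∀ jj, Sm lam' jj = if u ≤ jj ∧ jj < v then Sm lam jj - 1 else Sm lam jj := by
      intro jj
      have : Sm lam' jj = ∑ k ∈ Finset.Icc 1 jj, movePart lam u v k := by
        rw [Sm]
        exact Finset.sum_congr rfl fun k _ => by rw [hlp]
      rw [this]
      by_cases hcase : u ≤ jj ∧ jj < v
      · rw [if_pos hcase]
        have := sum_movePart_mid (lam := lam) h1u hv.1 hup1 jj hcase.1 hcase.2
        omega
      · rw [if_neg hcase]
        push_neg at hcase
        rcases Nat.lt_or_ge jj u with h | h
        · exact sum_movePart_lt hv.1 jj h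
        · exact sum_movePart_ge h1u hv.1 hup1 jj (hcase h)
    -- weight preserved
    have hw' : lam'.weight = lam.weight := by
      rw [weight_eq_sum lam' B1 hBl'1, weight_eq_sum lam B1 hBl1]
      have := hSm' B1
      rw [if_neg (by omega)] at this
      exact this
    -- dominance of lam' over mu
    have hdom' : lam'.Dominates mu := by
      constructor
      · rw [hw', hw]
      · intro jj hjj
        have h1 : Sm mu jj ≤ Sm lam' jj := by
          rw [hSm' jj]
          by_cases hcase : u ≤ jj ∧ jj < v
          · rw [if_pos hcase]
            have := hgap jj (by omega) hcase.2
            omega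
          · rw [if_neg hcase]
            have := hdom.2 jj hjj
            exact this
        exact h1
    -- measure decreases
    have hmeas : dmeasure lam' mu < d := by
      rw [dmeasure_eq_sum lam' mu B1 hBl'1 hBm1 (by rw [hw', hw])]
      have hdB1 : d = ∑ jj ∈ Finset.Icc 1 B1, (Sm lam jj - Sm mu jj) := by
        rw [← hd, dmeasure_eq_sum lam mu B1 hBl1 hBm1 hw]
      rw [hdB1]
      apply Finset.sum_lt_sum
      · intro jj _
        rw [hSm' jj]
        split
        · omega
        · omega
      · refine ⟨u, by simp only [Finset.mem_Icc]; omega, ?_⟩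
        rw [hSm' u, if_pos ⟨le_rfl, hv.1⟩]
        have := hgap u hui hv.1
        omega
    -- probE lam ≤ probE lam'
    have hstep : probE (punif r) lam j t ≤ probE (punif r) lam' j t := by
      rw [probE_eq r lam t B1 j hBl1, probE_eq r lam' t B1 j hBl'1, hw']
      apply mul_le_mul_of_nonneg_left _ (by positivity)
      -- coefficient inequality between the two products
      have huIcc : u ∈ Finset.Icc 1 B1 := by simp only [Finset.mem_Icc]; omega
      have hvIcc : v ∈ Finset.Icc 1 B1 := by simp only [Finset.mem_Icc]; omega
      have hne : u ≠ v := by omega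
      rw [Gp, Gp, prod_split (Finset.Icc 1 B1) (fun k => Tq r (lam.part k) t) huIcc hvIcc hne,
        prod_split (Finset.Icc 1 B1) (fun k => Tq r (lam'.part k) t) huIcc hvIcc hne]
      have hRe : ∏ k ∈ ((Finset.Icc 1 B1).erase u).erase v, Tq r (lam'.part k) t
          = ∏ k ∈ ((Finset.Icc 1 B1).erase u).erase v, Tq r (lam.part k) t := by
        refine Finset.prod_congr rfl fun k hk => ?_
        simp only [Finset.mem_erase] at hk
        rw [hlp]
        unfold movePart
        rw [if_neg hk.2.1, if_neg hk.1]
      rw [hRe]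
      have hu' : lam'.part u = lam.part u - 1 := by
        rw [hlp]; unfold movePart; rw [if_pos rfl]
      have hv' : lam'.part v = lam.part v + 1 := by
        rw [hlp]; unfold movePart; rw [if_neg (by omega), if_pos rfl]
      rw [hu', hv']
      apply coeff_mul_mono _ (fun k => ?_) j
      · intro k
        have hrw : lam.part u = (lam.part u - 1) + 1 := by omega
        rw [hrw]
        exact pair (lam.part u - 1) (lam.part v) t k (by omega)
      · -- nonnegativity of the product of the remaining factors
        exact (posUpTo_prod (((Finset.Icc 1 B1).erase u).erase v)
          (fun kk => Tq r (lam.part kk) t) (fun kk => min t (r * lam.part kk))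
          (fun i2 _ => posUpTo_Tq r (lam.part i2) t)).2.2 k
    have hrest := ih (dmeasure lam' mu) hmeas lam' hdom' rfl j t
    exact le_trans hstep hrest


lemma posUpTo_Gp (r : ℕ) (lam : PartitionSeq) (t B : ℕ) :
    PosUpTo (Gp r lam t B) (∑ i ∈ Finset.Icc 1 B, min t (r * lam.part i)) :=
  posUpTo_prod _ _ _ fun i _ => posUpTo_Tq r (lam.part i) t

theorem backward (r : ℕ) (hr : 1 ≤ r) (lam mu : PartitionSeq)
    (hw : lam.weight = mu.weight) (hC : CondC (punif r) lam mu) :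
    lam.Dominates mu := by
  refine ⟨hw, fun j hj => ?_⟩
  obtain ⟨B0, hB0l, hB0m⟩ := exists_bound lam mu
  set B : ℕ := max B0 (j+1) with hBdef
  have hBl : ∀ i, lam.part i ≠ 0 → i ≤ B := fun i hi => le_trans (hB0l i hi) (le_max_left _ _)
  have hBm : ∀ i, mu.part i ≠ 0 → i ≤ B := fun i hi => le_trans (hB0m i hi) (le_max_left _ _)
  have hjB : j + 1 ≤ B := le_max_right _ _
  -- col inequality for every t
  have hDlm : ∀ t : ℕ, ∑ i ∈ Finset.Icc 1 B, min t (r * lam.part i)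
      ≤ ∑ i ∈ Finset.Icc 1 B, min t (r * mu.part i) := by
    intro t
    by_contra hcon
    push_neg at hcon
    set Dl := ∑ i ∈ Finset.Icc 1 B, min t (r * lam.part i) with hDl
    have h1 : 0 < probE (punif r) lam Dl t := by
      rw [probE_eq r lam t B Dl hBl]
      have hc : (0:ℝ) < (((r:ℝ)+1)⁻¹) ^ lam.weight := by positivity
      exact mul_pos hc ((posUpTo_Gp r lam t B).1 Dl le_rfl)
    have h2 : probE (punif r) mu Dl t = 0 := by
      rw [probE_eq r mu t B Dl hBm, (posUpTo_Gp r mu t B).2.1 Dl hcon, mul_zero]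
    have := hC Dl t
    linarith
  -- divide out r
  have hcol : ∀ s : ℕ, ∑ i ∈ Finset.Icc 1 B, min s (lam.part i)
      ≤ ∑ i ∈ Finset.Icc 1 B, min s (mu.part i) := by
    intro s
    have h := hDlm (r * s)
    have e : ∀ (g : ℕ → ℕ), (∑ i ∈ Finset.Icc 1 B, min (r*s) (r * g i))
        = r * ∑ i ∈ Finset.Icc 1 B, min s (g i) := by
      intro g
      rw [Finset.mul_sum]
      exact Finset.sum_congr rfl fun i _ => min_mul_mul_left r s (g i)
    rw [e lam.part, e mu.part] at h
    exact Nat.le_of_mul_le_mul_left h (by omega)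
  -- specialize to s = lam.part (j+1)
  set s := lam.part (j+1) with hsdef
  have hsplit : ∀ (f : ℕ → ℕ), ∑ k ∈ Finset.Icc 1 B, f k
      = (∑ k ∈ Finset.Icc 1 j, f k) + ∑ k ∈ Finset.Ioc j B, f k := by
    intro f
    rw [show Finset.Icc 1 B = Finset.Ioc 0 B from rfl,
      show Finset.Icc 1 j = Finset.Ioc 0 j from rfl]
    exact (Finset.sum_Ioc_consecutive f (Nat.zero_le j) (by omega)).symm
  have hLlow : ∑ k ∈ Finset.Icc 1 j, min s (lam.part k) = j * s := by
    have : ∀ k ∈ Finset.Icc 1 j, min s (lam.part k) = s := by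
      intro k hk
      simp only [Finset.mem_Icc] at hk
      have := lam.antitone hk.1 (show k ≤ j + 1 by omega)
      omega
    rw [Finset.sum_congr rfl this, Finset.sum_const, Nat.card_Icc]
    simp [Nat.mul_comm]
  have hLhigh : ∑ k ∈ Finset.Ioc j B, min s (lam.part k) = ∑ k ∈ Finset.Ioc j B, lam.part k := by
    refine Finset.sum_congr rfl fun k hk => ?_
    simp only [Finset.mem_Ioc] at hk
    have := lam.antitone (show 1 ≤ j+1 by omega) (show j+1 ≤ k by omega)
    omega
  have hMlow : ∑ k ∈ Finset.Icc 1 j, min s (mu.part k) ≤ j * s := by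
    calc ∑ k ∈ Finset.Icc 1 j, min s (mu.part k) ≤ ∑ k ∈ Finset.Icc 1 j, s :=
        Finset.sum_le_sum fun k _ => min_le_left _ _
      _ = j * s := by rw [Finset.sum_const, Nat.card_Icc]; simp [Nat.mul_comm]
  have hMhigh : ∑ k ∈ Finset.Ioc j B, min s (mu.part k) ≤ ∑ k ∈ Finset.Ioc j B, mu.part k :=
    Finset.sum_le_sum fun k _ => min_le_right _ _
  have hwl : (∑ k ∈ Finset.Icc 1 j, lam.part k) + (∑ k ∈ Finset.Ioc j B, lam.part k)
      = lam.weight := by rw [weight_eq_sum lam B hBl, hsplit lam.part]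
  have hwm : (∑ k ∈ Finset.Icc 1 j, mu.part k) + (∑ k ∈ Finset.Ioc j B, mu.part k)
      = mu.weight := by rw [weight_eq_sum mu B hBm, hsplit mu.part]
  have hkey := hcol s
  rw [hsplit (fun k => min s (lam.part k)), hsplit (fun k => min s (mu.part k))] at hkey
  rw [hLlow, hLhigh] at hkey
  omega

end DomC

/-- **Corollary (uniform case).** For `U_r` uniform on `{0,1,…,r}` and
partitions `λ, μ` of the same weight, `λ ⊵ μ` iff `C(λ,μ,U_r)`. -/
theorem dominance_iff_condC_uniform (r : ℕ) (hr : 1 ≤ r) (n : ℕ)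
    (lam mu : PartitionSeq) (h1 : lam.weight = n) (h2 : mu.weight = n) :
    lam.Dominates mu ↔
      CondC (fun k => if k ≤ r then (1 : ℝ) / (r + 1) else 0) lam mu := by
  constructor
  · intro hdom j t
    exact DomC.forward_aux r mu (DomC.dmeasure lam mu) lam hdom rfl j t
  · intro hC
    exact DomC.backward r hr lam mu (by rw [h1, h2]) hC
end
end

section
/- Let k ∈ ℕ and let p = {p_n}_{n=0}^∞ be a sequence of real numbers. If the Toeplitz matrix T_p is totally non-negative of order k, then the matrix S_p of coefficients of powers of p is totally non-negative of order k. -/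
open Finset

noncomputable section

section Aux

open Classical in
/-- Cauchy–Binet style nonnegativity: if all maximal minors with strictly
increasing column (resp. row) choices of `A` (resp. `B`) are nonnegative, then
`det (A * B) ≥ 0`. -/
lemma det_mul_nonneg_aux {l m : ℕ} (A : Matrix (Fin l) (Fin m) ℝ) (B : Matrix (Fin m) (Fin l) ℝ)
    (hA : ∀ g : Fin l → Fin m, StrictMono g → 0 ≤ (A.submatrix id g).det)
    (hB : ∀ g : Fin l → Fin m, StrictMono g → 0 ≤ (B.submatrix g id).det) :
    0 ≤ (A * B).det := by
  have step1 : (A * B).det = ∑ r : Fin l → Fin m,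
      (∏ i, B (r i) i) * (A.submatrix id r).det := by
    rw [Matrix.det_apply']
    have expand : ∀ σ : Equiv.Perm (Fin l),
        (∏ i, (A * B) (σ i) i) = ∑ r : Fin l → Fin m, ∏ i, A (σ i) (r i) * B (r i) i := by
      intro σ
      simp only [Matrix.mul_apply]
      rw [Finset.prod_univ_sum]
      rw [Fintype.piFinset_univ]
    calc ∑ σ : Equiv.Perm (Fin l), ((Equiv.Perm.sign σ : ℤ) : ℝ) * ∏ i, (A * B) (σ i) i
        = ∑ σ : Equiv.Perm (Fin l), ∑ r : Fin l → Fin m,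
            ((Equiv.Perm.sign σ : ℤ) : ℝ) * ∏ i, A (σ i) (r i) * B (r i) i := by
          refine Finset.sum_congr rfl fun σ _ => ?_
          rw [expand σ, Finset.mul_sum]
      _ = ∑ r : Fin l → Fin m, ∑ σ : Equiv.Perm (Fin l),
            ((Equiv.Perm.sign σ : ℤ) : ℝ) * ∏ i, A (σ i) (r i) * B (r i) i :=
          Finset.sum_comm
      _ = ∑ r : Fin l → Fin m, (∏ i, B (r i) i) * (A.submatrix id r).det := by
          refine Finset.sum_congr rfl fun r _ => ?_
          rw [Matrix.det_apply', Finset.mul_sum]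
          refine Finset.sum_congr rfl fun σ _ => ?_
          rw [Finset.prod_mul_distrib]
          simp only [Matrix.submatrix_apply, id_eq]
          ring
  have step2 : (A * B).det = ∑ r ∈ Finset.univ.filter
      (fun r : Fin l → Fin m => Function.Injective r),
      (∏ i, B (r i) i) * (A.submatrix id r).det := by
    rw [step1]
    symm
    apply Finset.sum_subset (Finset.filter_subset _ _)
    intro r _ hr
    simp only [Finset.mem_filter, Finset.mem_univ, true_and] at hr
    rw [Function.Injective] at hr
    push_neg at hr
    obtain ⟨i, j, hij, hne⟩ := hr
    have hz : (A.submatrix id r).det = 0 :=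
      Matrix.det_zero_of_column_eq hne fun k => by simp [Matrix.submatrix_apply, hij]
    rw [hz, mul_zero]
  have step3 : (A * B).det = ∑ x ∈ (Finset.univ.filter
      (fun g : Fin l → Fin m => StrictMono g)) ×ˢ (Finset.univ : Finset (Equiv.Perm (Fin l))),
      (∏ i, B (x.1 (x.2 i)) i) * (A.submatrix id (x.1 ∘ x.2)).det := by
    rw [step2]
    refine Finset.sum_nbij'
      (fun r => (((r ∘ ⇑(Tuple.sort r)) : Fin l → Fin m),
        (((Tuple.sort r)⁻¹ : Equiv.Perm (Fin l)))))
      (fun x => x.1 ∘ x.2) ?_ ?_ ?_ ?_ ?_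
    · intro r hr
      simp only [Finset.mem_filter, Finset.mem_univ, true_and] at hr ⊢
      rw [Finset.mem_product]
      refine ⟨?_, Finset.mem_univ _⟩
      simp only [Finset.mem_filter, Finset.mem_univ, true_and]
      exact (Tuple.monotone_sort r).strictMono_of_injective
        (hr.comp (Equiv.injective _))
    · intro x hx
      rw [Finset.mem_product] at hx
      simp only [Finset.mem_filter, Finset.mem_univ, true_and] at hx ⊢
      exact hx.1.injective.comp (Equiv.injective _)
    · intro r _
      funext x
      simp [Function.comp, Equiv.Perm.coe_inv, Equiv.apply_symm_apply]
    · intro x hx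
      rw [Finset.mem_product] at hx
      simp only [Finset.mem_filter, Finset.mem_univ, true_and] at hx
      obtain ⟨g, σ⟩ := x
      have hx1 : StrictMono g := hx.1
      have h1 : (g ∘ σ) ∘ (Tuple.sort (g ∘ σ)) = g := by
        rw [Tuple.comp_perm_comp_sort_eq_comp_sort]
        rw [Tuple.sort_eq_refl_iff_monotone.mpr hx1.monotone]
        rfl
      have h2 : Tuple.sort (g ∘ σ) = σ⁻¹ := by
        ext y
        have := congrFun h1 y
        simp only [Function.comp_apply] at this
        have h3 := hx1.injective this
        have h4 : (Tuple.sort (g ∘ ⇑σ)) y = σ⁻¹ y := by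
          rw [Equiv.Perm.eq_inv_iff_eq]; exact h3
        rw [h4]
      simp only [Prod.mk.injEq]
      constructor
      · exact h2 ▸ h1
      · rw [h2, inv_inv]
    · intro r _
      have hkey : (r ∘ ⇑(Tuple.sort r)) ∘ ⇑((Tuple.sort r)⁻¹) = r := by
        funext x
        simp [Function.comp, Equiv.Perm.coe_inv, Equiv.apply_symm_apply]
      simp only [Function.comp_apply, Equiv.Perm.coe_inv, Equiv.apply_symm_apply, hkey,
        Function.comp_assoc, Equiv.self_comp_symm, Function.comp_id]
  rw [step3, Finset.sum_product]
  apply Finset.sum_nonneg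
  intro g hg
  simp only [Finset.mem_filter, Finset.mem_univ, true_and] at hg
  have colperm : ∀ σ : Equiv.Perm (Fin l),
      (A.submatrix id (g ∘ σ)).det = ((Equiv.Perm.sign σ : ℤ) : ℝ) * (A.submatrix id g).det := by
    intro σ
    have : A.submatrix id (g ∘ σ) = (A.submatrix id g).submatrix id σ := rfl
    rw [this, Matrix.det_permute']
  calc (0:ℝ) ≤ (A.submatrix id g).det * (B.submatrix g id).det :=
        mul_nonneg (hA g hg) (hB g hg)
    _ = ∑ σ : Equiv.Perm (Fin l),
          (∏ i, B (g (σ i)) i) * (((Equiv.Perm.sign σ : ℤ) : ℝ) * (A.submatrix id g).det) := by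
        rw [Matrix.det_apply' (B.submatrix g id), Finset.mul_sum]
        refine Finset.sum_congr rfl fun σ _ => ?_
        simp only [Matrix.submatrix_apply, id_eq]
        ring
    _ = ∑ σ : Equiv.Perm (Fin l), (∏ i, B (g (σ i)) i) * (A.submatrix id (g ∘ σ)).det := by
        refine Finset.sum_congr rfl fun σ _ => ?_
        rw [colperm σ]

end Aux

lemma sMatrix_factor (p : ℕ → ℝ) {l : ℕ} (r c : Fin (l+1) → ℕ)
    (hr1 : ∀ a, 1 ≤ r a) (hcb : ∀ b, c b ≤ c (Fin.last l)) :
    (sMatrix p).submatrix r c =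
      (Matrix.of fun (a : Fin (l+1)) (j : Fin (c (Fin.last l) + 1)) =>
        sMatrix p (r a - 1) (j : ℕ)) *
      (Matrix.of fun (j : Fin (c (Fin.last l) + 1)) (b : Fin (l+1)) =>
        toeplitz p (j : ℕ) (c b)) := by
  ext a b
  rw [Matrix.mul_apply]
  simp only [Matrix.submatrix_apply, Matrix.of_apply, sMatrix]
  have hpow : PowerSeries.mk p ^ r a = PowerSeries.mk p ^ (r a - 1) * PowerSeries.mk p := by
    conv_lhs => rw [← Nat.sub_add_cancel (hr1 a)]
    rw [pow_succ]
  rw [hpow, PowerSeries.coeff_mul, Finset.Nat.sum_antidiagonal_eq_sum_range_succ_mk]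
  rw [Fin.sum_univ_eq_sum_range
    (fun j => (PowerSeries.coeff j) (PowerSeries.mk p ^ (r a - 1)) * toeplitz p j (c b))
    (c (Fin.last l) + 1)]
  have hsub : ∑ j ∈ Finset.range (c (Fin.last l) + 1),
      (PowerSeries.coeff j) (PowerSeries.mk p ^ (r a - 1)) * toeplitz p j (c b)
      = ∑ j ∈ Finset.range (c b + 1),
      (PowerSeries.coeff j) (PowerSeries.mk p ^ (r a - 1)) * toeplitz p j (c b) := by
    symm
    apply Finset.sum_subset (Finset.range_subset_range.mpr (Nat.succ_le_succ (hcb b)))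
    intro j _ hj
    rw [Finset.mem_range, Nat.lt_succ_iff] at hj
    have : ¬ (j ≤ c b) := hj
    simp [toeplitz, this]
  rw [hsub]
  refine Finset.sum_congr rfl fun j hj => ?_
  rw [Finset.mem_range, Nat.lt_succ_iff] at hj
  simp [toeplitz, hj, PowerSeries.coeff_mk]

lemma key_induction (k : ℕ) (p : ℕ → ℝ)
    (h : ∀ l : ℕ, l ≤ k → ∀ r c : Fin l → ℕ, StrictMono r → StrictMono c →
      0 ≤ ((toeplitz p).submatrix r c).det) :
    ∀ n l, l ≤ k → ∀ r c : Fin l → ℕ, StrictMono r → StrictMono c →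
      l + ∑ a, r a ≤ n → 0 ≤ ((sMatrix p).submatrix r c).det := by
  intro n
  induction n using Nat.strong_induction_on with
  | _ n IH =>
    intro l hl r c hr hc hn
    obtain _ | l' := l
    · rw [Matrix.det_fin_zero]; exact zero_le_one
    · by_cases h0 : r 0 = 0
      · by_cases hc0 : c 0 = 0
        · have hrow : ∀ j : Fin (l'+1), ((sMatrix p).submatrix r c) 0 j
              = if j = 0 then 1 else 0 := by
            intro j
            simp only [Matrix.submatrix_apply, sMatrix, h0, pow_zero]
            rw [PowerSeries.coeff_one]
            by_cases hj : j = 0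
            · subst hj; simp [hc0]
            · have hpos : (0 : Fin (l'+1)) < j := Fin.pos_of_ne_zero hj
              have hcj : c 0 < c j := hc hpos
              rw [hc0] at hcj
              rw [if_neg (by omega), if_neg hj]
          rw [Matrix.det_succ_row_zero]
          rw [Finset.sum_eq_single (0 : Fin (l'+1))]
          · rw [hrow 0, if_pos rfl]
            simp only [Fin.val_zero, pow_zero, one_mul, mul_one]
            rw [Fin.succAbove_zero, Matrix.submatrix_submatrix]
            refine IH (l' + ∑ a : Fin l', r a.succ) ?_ l' (Nat.le_of_succ_le hl)
              (r ∘ Fin.succ) (c ∘ Fin.succ) (hr.comp Fin.strictMono_succ)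
              (hc.comp Fin.strictMono_succ) le_rfl
            have hsum : ∑ a : Fin (l'+1), r a = r 0 + ∑ a : Fin l', r a.succ :=
              Fin.sum_univ_succ r
            omega
          · intro j _ hj
            rw [hrow j, if_neg hj]; ring
          · intro hmem; exact absurd (Finset.mem_univ _) hmem
        · have hz : ((sMatrix p).submatrix r c).det = 0 := by
            apply Matrix.det_eq_zero_of_row_eq_zero 0
            intro j
            simp only [Matrix.submatrix_apply, sMatrix, h0, pow_zero]
            rw [PowerSeries.coeff_one, if_neg]
            have : c 0 ≤ c j := hc.monotone (Fin.zero_le j)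
            omega
          rw [hz]
      · have hr1 : ∀ a, 1 ≤ r a := fun a =>
          le_trans (Nat.one_le_iff_ne_zero.mpr h0) (hr.monotone (Fin.zero_le a))
        have hcb : ∀ b, c b ≤ c (Fin.last l') := fun b => hc.monotone (Fin.le_last b)
        rw [sMatrix_factor p r c hr1 hcb]
        apply det_mul_nonneg_aux
        · intro g hg
          have heq : (Matrix.of fun (a : Fin (l'+1)) (j : Fin (c (Fin.last l') + 1)) =>
              sMatrix p (r a - 1) (j : ℕ)).submatrix id g
              = (sMatrix p).submatrix (fun a => r a - 1) (fun b => ((g b : ℕ))) := rfl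
          rw [heq]
          refine IH ((l'+1) + ∑ a, (r a - 1)) ?_ (l'+1) hl _ _ ?_ ?_ le_rfl
          · have hs : ∑ a : Fin (l'+1), (r a - 1) + ∑ _a : Fin (l'+1), 1
                = ∑ a : Fin (l'+1), r a := by
              rw [← Finset.sum_add_distrib]
              exact Finset.sum_congr rfl fun a _ => Nat.sub_add_cancel (hr1 a)
            have hone : (∑ _a : Fin (l'+1), (1:ℕ)) = l'+1 := by simp
            rw [hone] at hs
            omega
          · intro a b hab
            have h1 := hr hab
            have h2 := hr1 a
            show r a - 1 < r b - 1
            omega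
          · intro a b hab
            exact_mod_cast hg hab
        · intro g hg
          have heq : (Matrix.of fun (j : Fin (c (Fin.last l') + 1)) (b : Fin (l'+1)) =>
              toeplitz p (j : ℕ) (c b)).submatrix g id
              = (toeplitz p).submatrix (fun j => ((g j : ℕ))) c := rfl
          rw [heq]
          exact h (l'+1) hl _ c (fun a b hab => by exact_mod_cast hg hab) hc


/-- **Theorem.** If the Toeplitz matrix `T_p` is totally non-negative of order
`k`, then so is `S_p`. -/
theorem sMatrix_TN_of_toeplitz_TN (k : ℕ) (p : ℕ → ℝ)
    (h : IsTN k (toeplitz p)) : IsTN k (sMatrix p) := by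
  intro l hl r c hr hc
  exact key_induction k p h (l + ∑ a, r a) l hl r c hr hc le_rfl
end
end
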